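/- arXiv:math/0008232 — 3 statements merged into one kernel-verified Lean document; each statement's English description precedes it below -/
import Mathlib

section
/- Let d be an algebraic integer such that d(d+1)···(d+k-1)/k! and d(d-1)···(d-k+1)/k! are algebraic integers for all positive integers k. Then d is a rational integer. -/
open Finset in
lemma sumsq_aux : ∀ n : ℕ, ∑ i ∈ Finset.Ico 1 (n+2), (1:ℝ)/(i:ℝ)^2 ≤ 2 - 1/(n+1) := by
  intro n
  induction n with
  | zero => norm_num
  | succ n ih =>
    rw [show n+1+2 = (n+2)+1 by ring, Finset.sum_Ico_succ_top (by omega)]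
    have h1 : (0:ℝ) < (n:ℝ)+1 := by positivity
    have h2 : (0:ℝ) < (n:ℝ)+2 := by positivity
    have : (1:ℝ)/((n+2:ℕ):ℝ)^2 ≤ 1/((n:ℝ)+1) - 1/((n:ℝ)+2) := by
      push_cast
      rw [div_sub_div _ _ (ne_of_gt h1) (ne_of_gt h2), div_le_div_iff₀ (by positivity) (by positivity)]
      ring_nf
      nlinarith
    push_cast at ih this ⊢
    have e : (n:ℝ)+1+1 = (n:ℝ)+2 := by ring
    rw [e]
    linarith

open Finset in
lemma sumsq (k : ℕ) : ∑ i ∈ Finset.Ico 1 k, (1:ℝ)/(i:ℝ)^2 ≤ 2 := by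
  match k with
  | 0 => simp
  | 1 => simp
  | (n+2) =>
    have := sumsq_aux n
    have h1 : (0:ℝ) < (n:ℝ)+1 := by positivity
    have : (1:ℝ)/((n:ℝ)+1) ≥ 0 := by positivity
    linarith [sumsq_aux n]

open Finset in
lemma prod_bound (C : ℝ) (hC : 0 ≤ C) (k : ℕ) (hk : 1 ≤ k)
    (hkC : C * Real.exp (2*C) < (k:ℝ)^2) :
    ∏ i ∈ Finset.range k, (C + (i:ℝ)^2) < ((k.factorial : ℝ))^2 := by
  have hsplit : ∏ i ∈ Finset.range k, (C + (i:ℝ)^2)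
      = C * ∏ i ∈ Finset.Ico 1 k, (C + (i:ℝ)^2) := by
    rw [Finset.range_eq_Ico, Finset.prod_eq_prod_Ico_succ_bot hk]
    norm_num
  have hP : (0:ℝ) < ∏ i ∈ Finset.Ico 1 k, (i:ℝ)^2 := by
    apply Finset.prod_pos
    intro i hi
    have : 1 ≤ i := (Finset.mem_Ico.mp hi).1
    positivity
  have step1 : ∏ i ∈ Finset.Ico 1 k, (C + (i:ℝ)^2)
      ≤ (∏ i ∈ Finset.Ico 1 k, (i:ℝ)^2) * Real.exp (2*C) := by
    calc ∏ i ∈ Finset.Ico 1 k, (C + (i:ℝ)^2)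
        ≤ ∏ i ∈ Finset.Ico 1 k, ((i:ℝ)^2 * Real.exp (C/(i:ℝ)^2)) := by
          apply Finset.prod_le_prod
          · intro i _; positivity
          · intro i hi
            have h1 : 1 ≤ i := (Finset.mem_Ico.mp hi).1
            have hi2 : (0:ℝ) < (i:ℝ)^2 := by
              have : (1:ℝ) ≤ (i:ℝ) := by exact_mod_cast h1
              positivity
            have := Real.add_one_le_exp (C/(i:ℝ)^2)
            calc C + (i:ℝ)^2 = (i:ℝ)^2 * (C/(i:ℝ)^2 + 1) := by
                  field_simp
              _ ≤ (i:ℝ)^2 * Real.exp (C/(i:ℝ)^2) := by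
                  exact mul_le_mul_of_nonneg_left this (le_of_lt hi2)
      _ = (∏ i ∈ Finset.Ico 1 k, (i:ℝ)^2) * Real.exp (∑ i ∈ Finset.Ico 1 k, C/(i:ℝ)^2) := by
          rw [Finset.prod_mul_distrib, Real.exp_sum]
      _ ≤ (∏ i ∈ Finset.Ico 1 k, (i:ℝ)^2) * Real.exp (2*C) := by
          apply mul_le_mul_of_nonneg_left _ (le_of_lt hP)
          apply Real.exp_le_exp.mpr
          have : ∑ i ∈ Finset.Ico 1 k, C/(i:ℝ)^2 = C * ∑ i ∈ Finset.Ico 1 k, (1:ℝ)/(i:ℝ)^2 := by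
            rw [Finset.mul_sum]; congr 1; ext i; ring
          rw [this]
          calc C * ∑ i ∈ Finset.Ico 1 k, (1:ℝ)/(i:ℝ)^2 ≤ C * 2 :=
                mul_le_mul_of_nonneg_left (sumsq k) hC
            _ = 2 * C := by ring
  have hfact : ((k.factorial : ℝ))^2 = (k:ℝ)^2 * ∏ i ∈ Finset.Ico 1 k, (i:ℝ)^2 := by
    have h1 : k.factorial = (∏ i ∈ Finset.Ico 1 k, i) * k := by
      rw [← Finset.prod_Ico_id_eq_factorial, Finset.prod_Ico_succ_top hk]
    have h2 : ((k.factorial : ℝ)) = (∏ i ∈ Finset.Ico 1 k, (i:ℝ)) * (k:ℝ) := by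
      rw [h1]; push_cast [Finset.prod_natCast]; ring
    rw [h2, mul_pow, ← Finset.prod_pow]
    ring
  rw [hsplit, hfact]
  calc C * ∏ i ∈ Finset.Ico 1 k, (C + (i:ℝ)^2)
      ≤ C * ((∏ i ∈ Finset.Ico 1 k, (i:ℝ)^2) * Real.exp (2*C)) :=
        mul_le_mul_of_nonneg_left step1 hC
    _ = (C * Real.exp (2*C)) * ∏ i ∈ Finset.Ico 1 k, (i:ℝ)^2 := by ring
    _ < (k:ℝ)^2 * ∏ i ∈ Finset.Ico 1 k, (i:ℝ)^2 := by
        exact mul_lt_mul_of_pos_right hkC hP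


open IntermediateField

/-- If `d` is an algebraic integer such that `d(d+1)⋯(d+k-1)/k!` and
`d(d-1)⋯(d-k+1)/k!` are algebraic integers for all positive integers `k`,
then `d` is a rational integer. -/
theorem stmt_0 (d : ℂ) (hd : IsIntegral ℤ d)
    (h1 : ∀ k : ℕ, 0 < k →
      IsIntegral ℤ ((∏ i ∈ Finset.range k, (d + (i : ℂ))) / (k.factorial : ℂ)))
    (h2 : ∀ k : ℕ, 0 < k →
      IsIntegral ℤ ((∏ i ∈ Finset.range k, (d - (i : ℂ))) / (k.factorial : ℂ))) :
    ∃ m : ℤ, d = (m : ℂ) := by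
  classical
  have hdQ : IsIntegral ℚ d := hd.tower_top
  haveI : FiniteDimensional ℚ ℚ⟮d⟯ := adjoin.finiteDimensional hdQ
  set x : ℚ⟮d⟯ := AdjoinSimple.gen ℚ d with hx
  have hxd : algebraMap ℚ⟮d⟯ ℂ x = d := AdjoinSimple.algebraMap_gen ℚ d
  haveI : Nonempty (ℚ⟮d⟯ →ₐ[ℚ] ℂ) := ⟨ℚ⟮d⟯.val⟩
  set M : ℝ := Finset.univ.sup' Finset.univ_nonempty
      (fun φ : ℚ⟮d⟯ →ₐ[ℚ] ℂ => ‖φ x‖) with hM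
  have hMle : ∀ φ : ℚ⟮d⟯ →ₐ[ℚ] ℂ, ‖φ x‖ ≤ M := fun φ =>
      Finset.le_sup' (fun φ : ℚ⟮d⟯ →ₐ[ℚ] ℂ => ‖φ x‖) (Finset.mem_univ φ)
  have hM0 : 0 ≤ M := le_trans (norm_nonneg _) (hMle ℚ⟮d⟯.val)
  set C : ℝ := M^2 with hC
  have hC0 : 0 ≤ C := sq_nonneg M
  set k : ℕ := ⌈(C+1) * Real.exp (2*C)⌉₊ + 1 with hk
  have hk1 : 1 ≤ k := Nat.le_add_left 1 _
  have hkpos : 0 < k := hk1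
  have hkC : C * Real.exp (2*C) < (k:ℝ)^2 := by
    have h1 : (C+1) * Real.exp (2*C) < (k:ℝ) := by
      have := Nat.le_ceil ((C+1) * Real.exp (2*C))
      have : (⌈(C+1) * Real.exp (2*C)⌉₊ : ℝ) < (k:ℝ) := by
        rw [hk]; push_cast; linarith
      linarith [Nat.le_ceil ((C+1) * Real.exp (2*C))]
    have hek : (1:ℝ) ≤ (k:ℝ) := by exact_mod_cast hk1
    have h2 : (k:ℝ) ≤ (k:ℝ)^2 := by nlinarith
    have h3 : C * Real.exp (2*C) < (C+1) * Real.exp (2*C) := by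
      have := Real.exp_pos (2*C); nlinarith
    linarith
  -- the element
  set α : ℚ⟮d⟯ := ((∏ i ∈ Finset.range k, (x + (i : ℚ⟮d⟯))) / (k.factorial : ℚ⟮d⟯))
      * ((∏ i ∈ Finset.range k, (x - (i : ℚ⟮d⟯))) / (k.factorial : ℚ⟮d⟯)) with hα
  have hmapα : ∀ (φ : ℚ⟮d⟯ →ₐ[ℚ] ℂ), φ α =
      ((∏ i ∈ Finset.range k, (φ x + (i:ℂ))) / (k.factorial : ℂ))
      * ((∏ i ∈ Finset.range k, (φ x - (i:ℂ))) / (k.factorial : ℂ)) := by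
    intro φ
    rw [hα, map_mul, map_div₀, map_div₀, map_prod, map_prod]
    simp
  have hcoeα : algebraMap ℚ⟮d⟯ ℂ α =
      ((∏ i ∈ Finset.range k, (d + (i:ℂ))) / (k.factorial : ℂ))
      * ((∏ i ∈ Finset.range k, (d - (i:ℂ))) / (k.factorial : ℂ)) := by
    have := hmapα ℚ⟮d⟯.val
    rw [show (algebraMap ℚ⟮d⟯ ℂ) = (ℚ⟮d⟯.val : ℚ⟮d⟯ →ₐ[ℚ] ℂ).toRingHom from rfl]
    simp only [AlgHom.toRingHom_eq_coe, RingHom.coe_coe]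
    refine this.trans ?_
    have : (ℚ⟮d⟯.val) x = d := hxd
    exact congrArg (fun y => (∏ i ∈ Finset.range k, (y + (i:ℂ))) / (k.factorial : ℂ) * ((∏ i ∈ Finset.range k, (y - (i:ℂ))) / (k.factorial : ℂ))) hxd
  have hαint : IsIntegral ℤ α := by
    rw [← isIntegral_algebraMap_iff (algebraMap ℚ⟮d⟯ ℂ).injective, hcoeα]
    exact (h1 k hkpos).mul (h2 k hkpos)
  -- abs bound
  have habs : ∀ φ : ℚ⟮d⟯ →ₐ[ℚ] ℂ, ‖φ α‖ < 1 := by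
    intro φ
    set e := φ x with he
    have heM : ‖e‖ ≤ M := hMle φ
    rw [hmapα φ, div_mul_div_comm, ← Finset.prod_mul_distrib]
    rw [norm_div, norm_prod, norm_mul, Complex.norm_natCast]
    have hkf : (0:ℝ) < (k.factorial : ℝ) := by exact_mod_cast k.factorial_pos
    rw [div_lt_one (by positivity)]
    have hterm : ∀ i ∈ Finset.range k,
        ‖(e + (i:ℂ)) * (e - (i:ℂ))‖ ≤ C + (i:ℝ)^2 := by
      intro i _
      have h1 : (e + (i:ℂ)) * (e - (i:ℂ)) = e^2 - ((i:ℂ))^2 := by ring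
      rw [h1]
      calc ‖e^2 - ((i:ℂ))^2‖
          ≤ ‖e^2‖ + ‖((i:ℂ))^2‖ := by
            rw [sub_eq_add_neg]
            exact le_trans (norm_add_le _ _) (le_of_eq (by rw [norm_neg]))
        _ = (‖e‖)^2 + (i:ℝ)^2 := by
            rw [norm_pow, norm_pow, Complex.norm_natCast]
        _ ≤ C + (i:ℝ)^2 := by
            have : (‖e‖)^2 ≤ M^2 := by
              nlinarith [norm_nonneg e]
            rw [hC]; linarith
    calc ∏ i ∈ Finset.range k, ‖(e + (i:ℂ)) * (e - (i:ℂ))‖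
        ≤ ∏ i ∈ Finset.range k, (C + (i:ℝ)^2) :=
          Finset.prod_le_prod (fun i _ => norm_nonneg _) hterm
      _ < ((k.factorial : ℝ))^2 := prod_bound C hC0 k hk1 hkC
      _ = (k.factorial : ℝ) * (k.factorial : ℝ) := sq (k.factorial : ℝ)
  -- norm
  set q : ℚ := Algebra.norm ℚ α with hq
  have hqmap : algebraMap ℚ ℂ q = ∏ φ : ℚ⟮d⟯ →ₐ[ℚ] ℂ, φ α :=
    Algebra.norm_eq_prod_embeddings ℚ ℂ α
  have hqint : IsIntegral ℤ q := by
    rw [← isIntegral_algebraMap_iff (algebraMap ℚ ℂ).injective, hqmap]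
    exact IsIntegral.prod _ (fun φ _ => hαint.map φ.toRingHom.toIntAlgHom)
  obtain ⟨z, hz⟩ := IsIntegrallyClosed.isIntegral_iff.mp hqint
  have habsq : ‖algebraMap ℚ ℂ q‖ < 1 := by
    rw [hqmap, norm_prod]
    have h0 : (ℚ⟮d⟯.val : ℚ⟮d⟯ →ₐ[ℚ] ℂ) ∈ Finset.univ := Finset.mem_univ _
    erw [← Finset.mul_prod_erase _ _ h0]
    have hrest : ∏ φ ∈ Finset.univ.erase (ℚ⟮d⟯.val), ‖φ α‖ ≤ 1 :=
      Finset.prod_le_one (fun φ _ => norm_nonneg _) (fun φ _ => (habs φ).le)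
    calc ‖(ℚ⟮d⟯.val) α‖ * ∏ φ ∈ Finset.univ.erase (ℚ⟮d⟯.val), ‖φ α‖
        ≤ ‖(ℚ⟮d⟯.val) α‖ * 1 :=
          mul_le_mul_of_nonneg_left hrest (norm_nonneg _)
      _ = ‖(ℚ⟮d⟯.val) α‖ := mul_one _
      _ < 1 := habs _
  have hz0 : z = 0 := by
    have : algebraMap ℚ ℂ q = ((z : ℚ) : ℂ) := by rw [← hz]; norm_num
    rw [this] at habsq
    have : |(z:ℝ)| < 1 := by
      have := habsq
      rw [show (((z:ℚ)):ℂ) = ((z:ℝ):ℂ) by push_cast; ring, Complex.norm_real, Real.norm_eq_abs] at this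
      exact this
    have hzlt : |z| < 1 := by exact_mod_cast this
    exact Int.abs_lt_one_iff.mp hzlt
  have hq0 : q = 0 := by rw [← hz, hz0]; norm_num
  have hα0 : α = 0 := Algebra.norm_eq_zero_iff.mp (by rw [← hq]; exact hq0)
  have : ((∏ i ∈ Finset.range k, (d + (i:ℂ))) / (k.factorial : ℂ))
      * ((∏ i ∈ Finset.range k, (d - (i:ℂ))) / (k.factorial : ℂ)) = 0 := by
    rw [← hcoeα, hα0, map_zero]
  have hkfC : ((k.factorial : ℂ)) ≠ 0 := by
    exact_mod_cast k.factorial_ne_zero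
  rcases mul_eq_zero.mp this with h | h
  · rcases (div_eq_zero_iff.mp h) with h' | h'
    · obtain ⟨i, _, hi⟩ := Finset.prod_eq_zero_iff.mp h'
      exact ⟨-(i:ℤ), by push_cast; linear_combination hi⟩
    · exact absurd h' hkfC
  · rcases (div_eq_zero_iff.mp h) with h' | h'
    · obtain ⟨i, _, hi⟩ := Finset.prod_eq_zero_iff.mp h'
      exact ⟨(i:ℤ), by push_cast; linear_combination hi⟩
    · exact absurd h' hkfC
end

section
/- Let Q(x) = x^n + a x^{n-1} + ... be a monic integer polynomial with a ≤ 0, and suppose that for every positive integer k the rational numbers Q(0)Q(1)···Q(k-1)/(k!)^n are integers. Then Q has an integer root. -/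
open Polynomial Filter

/-- If `Q(x) = x^n + a x^{n-1} + ⋯` is a monic integer polynomial with `a ≤ 0`, and for
every positive integer `k` the rational number `Q(0)Q(1)⋯Q(k-1)/(k!)^n` is an integer,
then `Q` has an integer root. -/
theorem stmt_1 (n : ℕ) (Q : Polynomial ℤ) (hQ : Q.Monic) (hdeg : Q.natDegree = n)
    (ha : Q.coeff (n - 1) ≤ 0)
    (hint : ∀ k : ℕ, 0 < k →
      ((k.factorial : ℤ) ^ n) ∣ ∏ j ∈ Finset.range k, Q.eval (j : ℤ)) :
    ∃ m : ℤ, Q.eval m = 0 := by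
  by_contra hroot
  push_neg at hroot
  -- `n ≥ 1`
  have hQn : Q.coeff n = 1 := by
    have := hQ.coeff_natDegree
    rwa [hdeg] at this
  have hn : 1 ≤ n := by
    rcases Nat.eq_zero_or_pos n with h0 | h
    · subst h0
      simp only [Nat.zero_sub] at ha
      omega
    · exact h
  -- the auxiliary polynomial `R = (X+1)^n - Q`
  set R : Polynomial ℤ := (X + 1) ^ n - Q with hR
  have hX1 : (X + 1 : Polynomial ℤ) = X + C 1 := by rw [C_1]
  have hXdeg : ((X + 1 : Polynomial ℤ) ^ n).natDegree = n := by
    rw [natDegree_pow, hX1, natDegree_X_add_C, mul_one]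
  have hRn : R.coeff n = 0 := by
    simp [hR, coeff_sub, coeff_X_add_one_pow, hQn]
  have hRn1 : R.coeff (n - 1) = (n : ℤ) - Q.coeff (n - 1) := by
    have hch : n.choose (n - 1) = n := by
      rw [Nat.choose_symm hn, Nat.choose_one_right]
    simp [hR, coeff_sub, coeff_X_add_one_pow, hch]
  have hRn1pos : 0 < R.coeff (n - 1) := by
    rw [hRn1]
    have : (1 : ℤ) ≤ (n : ℤ) := by exact_mod_cast hn
    omega
  have hRle : R.natDegree ≤ n := by
    refine le_trans (natDegree_sub_le _ _) ?_
    simp [hXdeg, hdeg]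
  have hRdeg : R.natDegree = n - 1 := by
    have h1 : R.natDegree ≤ n - 1 := by
      rw [natDegree_le_iff_coeff_eq_zero]
      intro k hk
      rcases eq_or_lt_of_le (show n ≤ k by omega) with h | h
      · rw [← h]; exact hRn
      · exact coeff_eq_zero_of_natDegree_lt (lt_of_le_of_lt hRle h)
    have h2 : n - 1 ≤ R.natDegree := le_natDegree_of_ne_zero hRn1pos.ne'
    omega
  have hRlead : R.leadingCoeff = R.coeff (n - 1) := by
    rw [leadingCoeff, hRdeg]
  have hRne : R ≠ 0 := fun h => by simp [h] at hRn1pos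
  -- pass to ℝ
  set f : ℤ →+* ℝ := Int.castRingHom ℝ with hf
  have hinj : Function.Injective f := Int.cast_injective
  have heval : ∀ (p : Polynomial ℤ) (k : ℕ),
      eval ((k : ℕ) : ℝ) (p.map f) = (Int.cast (p.eval (k : ℤ)) : ℝ) := by
    intro p k
    have := eval_intCast_map f p (k : ℤ)
    exact_mod_cast this
  -- Q is eventually positive
  have hQev : ∀ᶠ k : ℕ in atTop, 0 < Q.eval (k : ℤ) := by
    have hmon : (Q.map f).Monic := hQ.map f
    have hd : 0 < (Q.map f).degree := by
      rw [← natDegree_pos_iff_degree_pos, hQ.natDegree_map f, hdeg]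
      · exact hn
    have hT : Tendsto (fun x : ℝ => eval x (Q.map f)) atTop atTop :=
      tendsto_atTop_of_leadingCoeff_nonneg _ hd (by rw [hmon.leadingCoeff]; norm_num)
    have hT2 : Tendsto (fun k : ℕ => eval ((k : ℕ) : ℝ) (Q.map f)) atTop atTop :=
      hT.comp tendsto_natCast_atTop_atTop
    filter_upwards [hT2.eventually_gt_atTop 0] with k hk
    rw [heval] at hk
    exact_mod_cast hk
  -- R is eventually positive
  have hRev : ∀ᶠ k : ℕ in atTop, 0 < R.eval (k : ℤ) := by
    rcases eq_or_lt_of_le hn with h1 | h2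
    · -- n = 1 : R is a positive constant
      have hd0 : R.natDegree = 0 := by omega
      refine Filter.Eventually.of_forall (fun k => ?_)
      have := eq_C_of_natDegree_eq_zero hd0
      rw [this, eval_C]
      have : n - 1 = 0 := by omega
      rw [← this]
      exact hRn1pos
    · -- n ≥ 2 : R tends to +∞
      have hdmap : (R.map f).natDegree = R.natDegree :=
        natDegree_map_eq_of_injective hinj R
      have hleadmap : (R.map f).leadingCoeff = ((R.coeff (n-1) : ℤ) : ℝ) := by
        rw [leadingCoeff, hdmap, coeff_map, hRdeg, ← hRlead, hRlead]
        rfl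
      have hd : 0 < (R.map f).degree := by
        rw [← natDegree_pos_iff_degree_pos, hdmap, hRdeg]
        omega
      have hT : Tendsto (fun x : ℝ => eval x (R.map f)) atTop atTop := by
        refine tendsto_atTop_of_leadingCoeff_nonneg _ hd ?_
        rw [hleadmap]
        exact_mod_cast hRn1pos.le
      have hT2 : Tendsto (fun k : ℕ => eval ((k : ℕ) : ℝ) (R.map f)) atTop atTop :=
        hT.comp tendsto_natCast_atTop_atTop
      filter_upwards [hT2.eventually_gt_atTop 0] with k hk
      rw [heval] at hk
      exact_mod_cast hk
  obtain ⟨K, hK⟩ := Filter.eventually_atTop.mp (hQev.and hRev)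
  -- the integer sequence b
  have hdvd : ∀ k : ℕ, ((k.factorial : ℤ) ^ n) ∣ ∏ j ∈ Finset.range k, Q.eval (j : ℤ) := by
    intro k
    rcases Nat.eq_zero_or_pos k with h | h
    · subst h; simp
    · exact hint k h
  choose b hb using hdvd
  have hbne : ∀ k, b k ≠ 0 := by
    intro k hbk
    have : (∏ j ∈ Finset.range k, Q.eval (j : ℤ)) ≠ 0 :=
      Finset.prod_ne_zero_iff.mpr fun j _ => hroot j
    rw [hb k, hbk, mul_zero] at this
    exact this rfl
  -- recurrence
  have hrec : ∀ k : ℕ, b (k + 1) * ((k : ℤ) + 1) ^ n = b k * Q.eval (k : ℤ) := by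
    intro k
    have h1 := hb (k + 1)
    rw [Finset.prod_range_succ, hb k] at h1
    have hfact : (((k + 1).factorial : ℤ)) ^ n = ((k : ℤ) + 1) ^ n * ((k.factorial : ℤ)) ^ n := by
      rw [Nat.factorial_succ]
      push_cast [mul_pow]
      ring
    rw [hfact] at h1
    have hne : ((k.factorial : ℤ)) ^ n ≠ 0 := by positivity
    apply mul_left_cancel₀ hne
    linarith [h1]
  -- strict decrease of |b| beyond K
  have hlt : ∀ k, K ≤ k → |b (k + 1)| < |b k| := by
    intro k hk
    obtain ⟨hQpos, hRpos⟩ := hK k hk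
    have hevalR : R.eval (k : ℤ) = ((k : ℤ) + 1) ^ n - Q.eval (k : ℤ) := by
      simp [hR, eval_sub, eval_pow]
    have hQlt : Q.eval (k : ℤ) < ((k : ℤ) + 1) ^ n := by
      rw [hevalR] at hRpos; linarith
    have hpow : (0 : ℤ) < ((k : ℤ) + 1) ^ n := by positivity
    have h1 : |b (k + 1)| * ((k : ℤ) + 1) ^ n = |b k| * Q.eval (k : ℤ) := by
      have := congrArg abs (hrec k)
      rwa [abs_mul, abs_mul, abs_of_pos hpow, abs_of_pos hQpos] at this
    have h2 : |b k| * Q.eval (k : ℤ) < |b k| * ((k : ℤ) + 1) ^ n := by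
      have hbk : 0 < |b k| := abs_pos.mpr (hbne k)
      exact mul_lt_mul_of_pos_left hQlt hbk
    have h3 : |b (k + 1)| * ((k : ℤ) + 1) ^ n < |b k| * ((k : ℤ) + 1) ^ n := by
      rw [h1]; exact h2
    exact lt_of_mul_lt_mul_right h3 hpow.le
  -- infinite descent
  have hdesc : ∀ i : ℕ, |b (K + i)| + i ≤ |b K| := by
    intro i
    induction i with
    | zero => simp
    | succ i ih =>
      have := hlt (K + i) (Nat.le_add_right K i)
      have h' : |b (K + i + 1)| + 1 ≤ |b (K + i)| := this
      push_cast
      push_cast at ih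
      have : K + (i + 1) = K + i + 1 := by ring
      rw [this]
      linarith
  exact absurd (hdesc ((b K).natAbs + 1)) (by
    have h1 : (1 : ℤ) ≤ |b (K + ((b K).natAbs + 1))| := Int.one_le_abs (hbne _)
    have h2 : |b K| = ((b K).natAbs : ℤ) := Int.abs_eq_natAbs _
    push_cast
    omega)
end

section
/- In Sweedler's 4-dimensional Hopf algebra H, generated by a grouplike g and an element x with Δ(x) = x⊗1 + g⊗x, relations g² = 1, x² = 0, gx = −xg, the element J_λ := 1⊗1 − (λ/2) gx⊗x is a twist: it is invertible and satisfies (Δ⊗id)(J_λ)(J_λ⊗1) = (id⊗Δ)(J_λ)(1⊗J_λ) and (ε⊗id)(J_λ) = (id⊗ε)(J_λ) = 1, for every λ ∈ ℂ. -/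
open TensorProduct

/-- In Sweedler's 4-dimensional Hopf algebra (a Hopf algebra with a grouplike `g` and a
`(1,g)`-skewprimitive `x` with `g² = 1`, `x² = 0`, `gx = -xg`), the element
`J_λ = 1⊗1 - (λ/2) gx ⊗ x` is a twist for every `λ ∈ ℂ`: it is invertible and satisfies
`(Δ⊗id)(J_λ)(J_λ⊗1) = (id⊗Δ)(J_λ)(1⊗J_λ)` and `(ε⊗id)(J_λ) = (id⊗ε)(J_λ) = 1`. -/
theorem stmt_16 (H : Type) [Ring H] [HopfAlgebra ℂ H] (g x : H)
    (hg2 : g * g = 1) (hx2 : x * x = 0) (hgx : g * x = -(x * g))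
    (hΔg : Coalgebra.comul (R := ℂ) g = g ⊗ₜ g) (hεg : Coalgebra.counit (R := ℂ) g = 1)
    (hΔx : Coalgebra.comul (R := ℂ) x = x ⊗ₜ 1 + g ⊗ₜ x)
    (hεx : Coalgebra.counit (R := ℂ) x = 0) (lam : ℂ) :
    let J : H ⊗[ℂ] H := 1 - (lam / 2) • ((g * x) ⊗ₜ x)
    -- invertibility
    (J * (1 + (lam / 2) • ((g * x) ⊗ₜ x)) = 1 ∧
     (1 + (lam / 2) • ((g * x) ⊗ₜ x)) * J = 1) ∧
    -- the twist equation
    (Algebra.TensorProduct.assoc ℂ ℂ ℂ H H H)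
        ((LinearMap.rTensor H (Bialgebra.comulAlgHom ℂ H).toLinearMap) J *
          (Algebra.TensorProduct.includeLeft (S := ℂ)) J) =
      (LinearMap.lTensor H (Bialgebra.comulAlgHom ℂ H).toLinearMap) J *
        Algebra.TensorProduct.includeRight J ∧
    -- the counit conditions
    (TensorProduct.lid ℂ H) ((LinearMap.rTensor H (Coalgebra.counit (R := ℂ))) J) = 1 ∧
    (TensorProduct.rid ℂ H) ((LinearMap.lTensor H (Coalgebra.counit (R := ℂ))) J) = 1 := by
  intro J
  have hxg : x * g = -(g * x) := by rw [hgx, neg_neg]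
  have hgxgx : (g * x) * (g * x) = 0 := by
    calc (g * x) * (g * x) = g * (x * g) * x := by noncomm_ring
      _ = g * (-(g * x)) * x := by rw [hxg]
      _ = -((g * g) * (x * x)) := by noncomm_ring
      _ = 0 := by rw [hg2, hx2, one_mul, neg_zero]
  have hxgx : x * (g * x) = 0 := by
    calc x * (g * x) = (x * g) * x := by noncomm_ring
      _ = (-(g * x)) * x := by rw [hxg]
      _ = -(g * (x * x)) := by noncomm_ring
      _ = 0 := by rw [hx2, mul_zero, neg_zero]
  have hgxx : (g * x) * x = 0 := by rw [mul_assoc, hx2, mul_zero]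
  have ht : ((g * x) ⊗ₜ[ℂ] x) * ((g * x) ⊗ₜ[ℂ] x) = 0 := by
    rw [Algebra.TensorProduct.tmul_mul_tmul, hx2, tmul_zero]
  have hΔgx : Coalgebra.comul (R := ℂ) (g * x)
      = (g * x) ⊗ₜ[ℂ] g + (1 : H) ⊗ₜ[ℂ] (g * x) := by
    have : Coalgebra.comul (R := ℂ) (g * x)
        = Coalgebra.comul (R := ℂ) g * Coalgebra.comul (R := ℂ) x :=
      map_mul (Bialgebra.comulAlgHom ℂ H) g x
    rw [this, hΔg, hΔx, mul_add, Algebra.TensorProduct.tmul_mul_tmul,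
      Algebra.TensorProduct.tmul_mul_tmul, mul_one, hg2]
  have hεgx : Coalgebra.counit (R := ℂ) (g * x) = 0 := by
    have : Coalgebra.counit (R := ℂ) (g * x)
        = Coalgebra.counit (R := ℂ) g * Coalgebra.counit (R := ℂ) x :=
      map_mul (Bialgebra.counitAlgHom ℂ H) g x
    rw [this, hεx, mul_zero]
  have h0 : ((lam / 2) • ((g * x) ⊗ₜ[ℂ] x)) * ((lam / 2) • ((g * x) ⊗ₜ[ℂ] x)) = 0 := by
    rw [smul_mul_assoc, mul_smul_comm, ht, smul_zero, smul_zero]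
  refine ⟨⟨?_, ?_⟩, ?_, ?_, ?_⟩
  · show (1 - _) * (1 + _) = 1
    rw [sub_mul, one_mul, mul_add, mul_one, h0, add_zero, add_sub_cancel_right]
  · show (1 + _) * (1 - _) = 1
    rw [add_mul, one_mul, mul_sub, mul_one, h0, sub_zero, sub_add_cancel]
  · show _ = _
    simp only [J, map_sub, map_smul, Algebra.TensorProduct.includeLeft_apply,
      Algebra.TensorProduct.includeRight_apply, Algebra.TensorProduct.one_def,
      LinearMap.rTensor_tmul, LinearMap.lTensor_tmul, AlgHom.toLinearMap_apply,
      Bialgebra.comulAlgHom_apply, Bialgebra.comul_one, hΔgx, hΔx, add_tmul, tmul_add,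
      sub_mul, mul_sub, add_mul, mul_add, one_mul, mul_one, Algebra.TensorProduct.tmul_mul_tmul,
      smul_mul_assoc, mul_smul_comm, hgxgx, hxgx, hgxx, hx2, zero_tmul, tmul_zero,
      smul_zero, sub_zero, map_add, map_sub, map_smul, map_zero,
      Algebra.TensorProduct.assoc_tmul]
    module
  · simp only [J, map_sub, map_smul, map_one, Algebra.TensorProduct.one_def, LinearMap.rTensor_tmul, hεgx,
      Bialgebra.counit_one, zero_tmul, smul_zero, sub_zero, lid_tmul, one_smul]
  · simp only [J, map_sub, map_smul, map_one, Algebra.TensorProduct.one_def, LinearMap.lTensor_tmul, hεx,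
      Bialgebra.counit_one, tmul_zero, smul_zero, sub_zero, rid_tmul, one_smul]
end
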